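/- Let E be a sharply orthocomplete S-dominating effect algebra. Then S(E), with the inherited operations, is a complete orthomodular lattice which is bifull in E. -/

import Mathlib

universe u v

/-- An effect algebra: a partial algebra `(E; ⊕, 0, 1)` with `0 ≠ 1`, where `⊕` is
partially defined (domain `D`), commutative and associative where defined, every
element has a unique orthosupplement (`compl`, skolemizing axiom (Eiii)), and
`1 ⊕ x` defined implies `x = 0`. -/
structure EffectAlgebra (E : Type u) where
  D : E → E → Prop
  oplus : E → E → E
  zero : E
  one : E
  zero_ne_one : zero ≠ one
  D_comm : ∀ x y, D x y → D y x
  oplus_comm : ∀ x y, D x y → oplus x y = oplus y x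
  assoc : ∀ x y z, D x y → D (oplus x y) z →
      D y z ∧ D x (oplus y z) ∧ oplus (oplus x y) z = oplus x (oplus y z)
  assoc' : ∀ x y z, D y z → D x (oplus y z) →
      D x y ∧ D (oplus x y) z ∧ oplus (oplus x y) z = oplus x (oplus y z)
  compl : E → E
  D_compl : ∀ x, D x (compl x)
  oplus_compl : ∀ x, oplus x (compl x) = one
  compl_unique : ∀ x y, D x y → oplus x y = one → y = compl x
  one_max : ∀ x, D one x → x = zero

namespace EffectAlgebra

variable {E : Type u} (A : EffectAlgebra E)

/-- The induced order: `x ≤ y` iff `x ⊕ z = y` for some `z`. -/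
def le (x y : E) : Prop := ∃ z, A.D x z ∧ A.oplus x z = y

def IsLB (S : Set E) (m : E) : Prop := ∀ x ∈ S, A.le m x
def IsUB (S : Set E) (m : E) : Prop := ∀ x ∈ S, A.le x m

/-- `m` is the infimum of `S` computed within the subposet `P`. -/
def IsInfIn (P : Set E) (S : Set E) (m : E) : Prop :=
  m ∈ P ∧ A.IsLB S m ∧ ∀ z ∈ P, A.IsLB S z → A.le z m

/-- `m` is the supremum of `S` computed within the subposet `P`. -/
def IsSupIn (P : Set E) (S : Set E) (m : E) : Prop :=
  m ∈ P ∧ A.IsUB S m ∧ ∀ z ∈ P, A.IsUB S z → A.le m z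

/-- `w` is sharp iff the meet `w ∧ w'` exists in `E` and equals `0`. -/
def Sharp (w : E) : Prop := A.IsInfIn Set.univ {w, A.compl w} A.zero

/-- The set `S(E)` of sharp elements. -/
def sharpSet : Set E := {w | A.Sharp w}

def HasMeet (x y : E) : Prop := ∃ m, A.IsInfIn Set.univ {x, y} m
def HasJoin (x y : E) : Prop := ∃ j, A.IsSupIn Set.univ {x, y} j

/-- Every `x` has a least sharp element above it, which is the infimum of the sharp
elements above `x` both in `E` and in `S(E)`. -/
def SharplyDominating : Prop :=
  ∀ x : E, ∃ w, A.Sharp w ∧ A.le x w ∧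
    A.IsInfIn Set.univ {v | A.Sharp v ∧ A.le x v} w ∧
    A.IsInfIn A.sharpSet {v | A.Sharp v ∧ A.le x v} w

/-- Sharply dominating, and `x ∧ w` exists for every `x ∈ E`, `w ∈ S(E)`. -/
def SDominating : Prop :=
  A.SharplyDominating ∧ ∀ x w : E, A.Sharp w → A.HasMeet x w

end EffectAlgebra

/-- `SumDef A l s` : the orthosum of the finite list `l` is defined and equals `s`. -/
inductive EffectAlgebra.SumDef {E : Type u} (A : EffectAlgebra E) : List E → E → Prop
  | nil : EffectAlgebra.SumDef A [] A.zero
  | cons {x : E} {l : List E} {s : E} : EffectAlgebra.SumDef A l s → A.D x s →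
      EffectAlgebra.SumDef A (x :: l) (A.oplus x s)

namespace EffectAlgebra

variable {E : Type u} (A : EffectAlgebra E)

/-- A family is orthogonal iff every finite subfamily has a defined orthosum. -/
def Orthogonal {ι : Type v} (x : ι → E) : Prop :=
  ∀ l : List ι, l.Nodup → ∃ s, A.SumDef (l.map x) s

/-- The set of finite partial orthosums of a family. -/
def finiteSums {ι : Type v} (x : ι → E) : Set E :=
  {s | ∃ l : List ι, l.Nodup ∧ A.SumDef (l.map x) s}

/-- `v = ⊕ x` : the family is orthogonal and `v` is the supremum in `E` of all
finite partial orthosums. -/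
def HasOrthoSum {ι : Type v} (x : ι → E) (v : E) : Prop :=
  A.Orthogonal x ∧ A.IsSupIn Set.univ (A.finiteSums x) v

/-- Every family dominated elementwise by an orthogonal family of sharp
elements has an orthosum. -/
def SharplyOrthocomplete : Prop :=
  ∀ (ι : Type u) (x w : ι → E), (∀ k, A.Sharp (w k)) → A.Orthogonal w →
    (∀ k, A.le (x k) (w k)) → ∃ v, A.HasOrthoSum x v

/-- `c` is central: for every `y` the meets `y ∧ c`, `y ∧ c'` exist and
`y = (y ∧ c) ∨ (y ∧ c')`. -/
def Central (c : E) : Prop :=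
  ∀ y : E, ∃ m₁ m₂, A.IsInfIn Set.univ {y, c} m₁ ∧
    A.IsInfIn Set.univ {y, A.compl c} m₂ ∧ A.IsSupIn Set.univ {m₁, m₂} y

/-- The center `C(E)`. -/
def centerSet : Set E := {c | A.Central c}

def CentrallyDominating : Prop :=
  ∀ x : E, ∃ c, A.Central c ∧ A.le x c ∧
    A.IsInfIn Set.univ {d | A.Central d ∧ A.le x d} c ∧
    A.IsInfIn A.centerSet {d | A.Central d ∧ A.le x d} c

def CentrallyOrthocomplete : Prop :=
  ∀ (ι : Type u) (x c : ι → E), (∀ k, A.Central (c k)) → A.Orthogonal c →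
    (∀ k, A.le (x k) (c k)) → ∃ v, A.HasOrthoSum x v

/-- `P` is bifull in `E`: for `S ⊆ P`, the join of `S` in `P` exists iff the join
of `S` in `E` exists, and then they coincide. -/
def Bifull (P : Set E) : Prop :=
  ∀ S ⊆ P, (∀ s, A.IsSupIn P S s → A.IsSupIn Set.univ S s) ∧
    (∀ s, A.IsSupIn Set.univ S s → A.IsSupIn P S s)

/-- The subposet `P` is a complete lattice: every subset of `P` has a supremum
(and an infimum) computed within `P`. -/
def CompleteIn (P : Set E) : Prop :=
  ∀ S ⊆ P, (∃ s, A.IsSupIn P S s) ∧ (∃ m, A.IsInfIn P S m)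

/-- `E` is a complete lattice. -/
def Complete : Prop :=
  ∀ S : Set E, (∃ s, A.IsSupIn Set.univ S s) ∧ (∃ m, A.IsInfIn Set.univ S m)

/-- The induced order of `E` is a lattice. -/
def LatticeOrdered : Prop := ∀ x y : E, A.HasMeet x y ∧ A.HasJoin x y

/-- `x ↔ y` : `x ∨ y = x ⊕ (y ⊖ (x ∧ y))`. -/
def Compatible (x y : E) : Prop :=
  ∃ m j z, A.IsInfIn Set.univ {x, y} m ∧ A.IsSupIn Set.univ {x, y} j ∧
    A.D m z ∧ A.oplus m z = y ∧ A.D x z ∧ A.oplus x z = j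

/-- An MV-effect algebra: a lattice effect algebra all of whose pairs of elements
are compatible. -/
def MV : Prop := A.LatticeOrdered ∧ ∀ x y : E, A.Compatible x y

/-- `nx = x ⊕ ⋯ ⊕ x` (`n` times) is defined. -/
def nTimesDef (n : ℕ) (x : E) : Prop := ∃ s, A.SumDef (List.replicate n x) s

/-- `ord x < ∞` for every nonzero `x`. -/
def IsArchimedean : Prop := ∀ x : E, x ≠ A.zero → ∃ n : ℕ, ¬ A.nTimesDef n x

def Atom (a : E) : Prop := a ≠ A.zero ∧ ∀ b, A.le b a → b = A.zero ∨ b = a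

def Atomic : Prop := ∀ x : E, x ≠ A.zero → ∃ a, A.Atom a ∧ A.le a x

/-- The subposet `P` (closed under `'`) is an orthomodular lattice. -/
def OrthomodularIn (P : Set E) : Prop :=
  (∀ x ∈ P, ∀ y ∈ P, (∃ m, A.IsInfIn P {x, y} m) ∧ (∃ j, A.IsSupIn P {x, y} j)) ∧
  A.zero ∈ P ∧ A.one ∈ P ∧ (∀ x ∈ P, A.compl x ∈ P) ∧
  (∀ x ∈ P, A.IsInfIn P {x, A.compl x} A.zero ∧ A.IsSupIn P {x, A.compl x} A.one) ∧
  (∀ x ∈ P, ∀ y ∈ P, A.le x y →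
    ∃ m, A.IsInfIn P {y, A.compl x} m ∧ A.IsSupIn P {x, m} y)

def DistributiveIn (P : Set E) : Prop :=
  ∀ x ∈ P, ∀ y ∈ P, ∀ z ∈ P, ∀ jyz mxy mxz m : E,
    A.IsSupIn P {y, z} jyz → A.IsInfIn P {x, y} mxy → A.IsInfIn P {x, z} mxz →
    A.IsInfIn P {x, jyz} m → A.IsSupIn P {mxy, mxz} m

/-- The subposet `P` is a Boolean algebra (complemented distributive lattice with
bounds, complement given by `'`). -/
def BooleanIn (P : Set E) : Prop :=
  (∀ x ∈ P, ∀ y ∈ P, (∃ m, A.IsInfIn P {x, y} m) ∧ (∃ j, A.IsSupIn P {x, y} j)) ∧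
  A.zero ∈ P ∧ A.one ∈ P ∧ (∀ x ∈ P, A.compl x ∈ P) ∧
  (∀ x ∈ P, A.IsInfIn P {x, A.compl x} A.zero ∧ A.IsSupIn P {x, A.compl x} A.one) ∧
  A.DistributiveIn P

/-- A block: a maximal set of pairwise compatible elements. -/
def Block (M : Set E) : Prop :=
  (∀ x ∈ M, ∀ y ∈ M, A.Compatible x y) ∧
  ∀ N : Set E, M ⊆ N → (∀ x ∈ N, ∀ y ∈ N, A.Compatible x y) → N = M

def AtomIn (M : Set E) (a : E) : Prop :=
  a ∈ M ∧ a ≠ A.zero ∧ ∀ b ∈ M, A.le b a → b = A.zero ∨ b = a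

def AtomicIn (M : Set E) : Prop :=
  ∀ x ∈ M, x ≠ A.zero → ∃ a, A.AtomIn M a ∧ A.le a x

end EffectAlgebra

namespace EffectAlgebra

variable {E : Type u} {A : EffectAlgebra E}

lemma compl_one : A.compl A.one = A.zero :=
  A.one_max _ (A.D_compl A.one)

lemma D_one_zero : A.D A.one A.zero := by
  have h := A.D_compl A.one; rwa [compl_one] at h

lemma oplus_one_zero : A.oplus A.one A.zero = A.one := by
  have h := A.oplus_compl A.one; rwa [compl_one] at h

lemma compl_compl (x : E) : A.compl (A.compl x) = x := by
  have hd := A.D_comm _ _ (A.D_compl x)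
  have he : A.oplus (A.compl x) x = A.one := by
    rw [A.oplus_comm _ _ hd, A.oplus_compl]
  exact (A.compl_unique _ _ hd he).symm

lemma compl_inj {x y : E} (h : A.compl x = A.compl y) : x = y := by
  have := congrArg A.compl h; rwa [compl_compl, compl_compl] at this

private lemma D_compl_zero' (x : E) :
    A.D (A.compl x) A.zero ∧ A.oplus (A.compl x) A.zero = A.compl x := by
  have h1 : A.D x (A.compl x) := A.D_compl x
  have h2 : A.D (A.oplus x (A.compl x)) A.zero := by
    rw [A.oplus_compl]; exact D_one_zero
  obtain ⟨hd1, hd2, he⟩ := A.assoc _ _ _ h1 h2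
  rw [A.oplus_compl] at he
  rw [oplus_one_zero] at he
  exact ⟨hd1, A.compl_unique _ _ hd2 he.symm⟩

lemma D_zero_right (x : E) : A.D x A.zero := by
  have := (D_compl_zero' (A := A) (A.compl x)).1; rwa [compl_compl] at this

lemma oplus_zero (x : E) : A.oplus x A.zero = x := by
  have := (D_compl_zero' (A := A) (A.compl x)).2; rwa [compl_compl] at this

lemma D_zero_left (x : E) : A.D A.zero x := A.D_comm _ _ (D_zero_right x)

lemma zero_oplus (x : E) : A.oplus A.zero x = x := by
  rw [A.oplus_comm _ _ (D_zero_left x), oplus_zero]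

lemma compl_zero : A.compl A.zero = A.one := by
  have hd : A.D A.zero A.one := D_zero_left _
  have : A.oplus A.zero A.one = A.one := zero_oplus _
  exact (A.compl_unique _ _ hd this).symm

/-- key subtraction lemma -/
lemma sub_compl {x z : E} (h : A.D x z) :
    A.D z (A.compl (A.oplus x z)) ∧
    A.oplus z (A.compl (A.oplus x z)) = A.compl x := by
  have h2 : A.D (A.oplus x z) (A.compl (A.oplus x z)) := A.D_compl _
  obtain ⟨hd1, hd2, he⟩ := A.assoc _ _ _ h h2
  rw [A.oplus_compl] at he
  exact ⟨hd1, A.compl_unique _ _ hd2 he.symm⟩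

lemma sub_compl_eq {x z : E} (h : A.D x z) :
    A.oplus z (A.compl (A.oplus x z)) = A.compl x := by
  have h2 : A.D (A.oplus x z) (A.compl (A.oplus x z)) := A.D_compl _
  obtain ⟨hd1, hd2, he⟩ := A.assoc _ _ _ h h2
  rw [A.oplus_compl] at he
  exact A.compl_unique _ _ hd2 he.symm

lemma cancel {x a b : E} (ha : A.D x a) (hb : A.D x b)
    (h : A.oplus x a = A.oplus x b) : a = b := by
  have e1 : A.compl a = A.oplus (A.compl (A.oplus x a)) x := by
    have h1 := (sub_compl ha).1
    have h2 := sub_compl_eq ha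
    have h3 := sub_compl_eq h1
    rw [h2, compl_compl] at h3
    exact h3.symm
  have e2 : A.compl b = A.oplus (A.compl (A.oplus x b)) x := by
    have h1 := (sub_compl hb).1
    have h2 := sub_compl_eq hb
    have h3 := sub_compl_eq h1
    rw [h2, compl_compl] at h3
    exact h3.symm
  apply compl_inj
  rw [e1, e2, h]

lemma le_refl (x : E) : A.le x x := ⟨A.zero, D_zero_right x, oplus_zero x⟩

lemma le_one (x : E) : A.le x A.one := ⟨A.compl x, A.D_compl x, A.oplus_compl x⟩

lemma zero_le (x : E) : A.le A.zero x := ⟨x, D_zero_left x, zero_oplus x⟩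

lemma oplus_eq_zero {a b : E} (hd : A.D a b) (h : A.oplus a b = A.zero) :
    a = A.zero ∧ b = A.zero := by
  have h2 : A.D (A.oplus a b) A.one := by rw [h]; exact D_zero_left _
  obtain ⟨hd1, _, _⟩ := A.assoc _ _ _ hd h2
  have hb : b = A.zero := A.one_max _ (A.D_comm _ _ hd1)
  refine ⟨?_, hb⟩
  rw [hb, oplus_zero] at h; exact h

lemma le_zero {a : E} (h : A.le a A.zero) : a = A.zero := by
  obtain ⟨z, hd, he⟩ := h
  exact (oplus_eq_zero hd he).1

lemma le_trans {x y z : E} (h1 : A.le x y) (h2 : A.le y z) : A.le x z := by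
  obtain ⟨a, hda, hea⟩ := h1
  obtain ⟨b, hdb, heb⟩ := h2
  rw [← hea] at hdb
  obtain ⟨hd1, hd2, he⟩ := A.assoc _ _ _ hda hdb
  exact ⟨A.oplus a b, hd2, by rw [← he, hea, heb]⟩

lemma le_antisymm {x y : E} (h1 : A.le x y) (h2 : A.le y x) : x = y := by
  obtain ⟨a, hda, hea⟩ := h1
  obtain ⟨b, hdb, heb⟩ := h2
  rw [← hea] at hdb
  obtain ⟨hd1, hd2, he⟩ := A.assoc _ _ _ hda hdb
  rw [hea, heb] at he
  have : A.oplus a b = A.zero := cancel hd2 (D_zero_right x) (by rw [← he, oplus_zero])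
  have ha : a = A.zero := (oplus_eq_zero hd1 this).1
  rw [ha, oplus_zero] at hea
  exact hea

lemma le_compl_of_D {x z : E} (h : A.D x z) : A.le z (A.compl x) :=
  ⟨A.compl (A.oplus x z), (sub_compl h).1, sub_compl_eq h⟩

lemma D_of_le_compl {x z : E} (h : A.le z (A.compl x)) : A.D x z := by
  obtain ⟨c, hdc, hec⟩ := h
  have h1 : A.D x (A.oplus z c) := by rw [hec]; exact A.D_compl x
  exact (A.assoc' _ _ _ hdc h1).1

lemma compl_le_compl {x y : E} (h : A.le x y) : A.le (A.compl y) (A.compl x) := by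
  obtain ⟨z, hd, he⟩ := h
  have h1 : A.D (A.oplus x z) (A.compl y) := by rw [he]; exact A.D_compl y
  obtain ⟨hd1, hd2, heq⟩ := A.assoc _ _ _ hd h1
  rw [he, A.oplus_compl] at heq
  have : A.oplus z (A.compl y) = A.compl x := A.compl_unique _ _ hd2 heq.symm
  exact ⟨z, A.D_comm _ _ hd1, by rw [A.oplus_comm _ _ (A.D_comm _ _ hd1), this]⟩

lemma le_of_compl_le {x y : E} (h : A.le (A.compl y) (A.compl x)) : A.le x y := by
  have := compl_le_compl (A := A) h
  rwa [compl_compl, compl_compl] at this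

lemma le_oplus_left {x z : E} (h : A.D x z) : A.le x (A.oplus x z) := ⟨z, h, rfl⟩

lemma le_oplus_right {x z : E} (h : A.D x z) : A.le z (A.oplus x z) :=
  ⟨x, A.D_comm _ _ h, A.oplus_comm _ _ (A.D_comm _ _ h)⟩

lemma oplus_le_oplus {a b c : E} (h : A.le a b) (hd : A.D b c) :
    A.D a c ∧ A.le (A.oplus a c) (A.oplus b c) := by
  obtain ⟨z, hdz, hez⟩ := h
  rw [← hez] at hd
  obtain ⟨hd1, hd2, he⟩ := A.assoc _ _ _ hdz hd
  have hcz : A.D c z := A.D_comm _ _ hd1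
  have hd2' : A.D a (A.oplus c z) := by rwa [A.oplus_comm _ _ hd1] at hd2
  obtain ⟨hdac, hdacz, he'⟩ := A.assoc' _ _ _ hcz hd2'
  refine ⟨hdac, ⟨z, hdacz, ?_⟩⟩
  rw [he', ← A.oplus_comm _ _ hd1, ← he, hez]

lemma cancel_le {x a b : E} (ha : A.D x a) (hb : A.D x b)
    (h : A.le (A.oplus x a) (A.oplus x b)) : A.le a b := by
  obtain ⟨z, hd, he⟩ := h
  obtain ⟨hd1, hd2, heq⟩ := A.assoc _ _ _ ha hd
  rw [heq] at he
  exact ⟨z, hd1, cancel hd2 hb he⟩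

end EffectAlgebra

namespace EffectAlgebra

variable {E : Type u} {A : EffectAlgebra E}

lemma isLB_pair {x y z : E} : A.IsLB {x, y} z ↔ A.le z x ∧ A.le z y := by
  constructor
  · intro h; exact ⟨h x (by simp), h y (by simp)⟩
  · rintro ⟨h1, h2⟩ a ha
    rcases ha with rfl | ha
    · exact h1
    · rcases ha with rfl; exact h2

lemma isUB_pair {x y z : E} : A.IsUB {x, y} z ↔ A.le x z ∧ A.le y z := by
  constructor
  · intro h; exact ⟨h x (by simp), h y (by simp)⟩
  · rintro ⟨h1, h2⟩ a ha
    rcases ha with rfl | ha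
    · exact h1
    · rcases ha with rfl; exact h2

lemma inf_unique {S : Set E} {m m' : E} (h : A.IsInfIn Set.univ S m)
    (h' : A.IsInfIn Set.univ S m') : m = m' :=
  le_antisymm (h'.2.2 m (Set.mem_univ m) h.2.1) (h.2.2 m' (Set.mem_univ m') h'.2.1)

lemma sup_unique {S : Set E} {m m' : E} (h : A.IsSupIn Set.univ S m)
    (h' : A.IsSupIn Set.univ S m') : m = m' :=
  le_antisymm (h.2.2 m' (Set.mem_univ m') h'.2.1) (h'.2.2 m (Set.mem_univ m) h.2.1)

lemma supIn_unique {P S : Set E} {m m' : E} (h : A.IsSupIn P S m)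
    (h' : A.IsSupIn P S m') : m = m' :=
  le_antisymm (h.2.2 m' h'.1 h'.2.1) (h'.2.2 m h.1 h.2.1)

lemma inf_pair_comm {P : Set E} {x y m : E} (h : A.IsInfIn P {x, y} m) :
    A.IsInfIn P {y, x} m := by rwa [Set.pair_comm y x]

lemma sharp_zero : A.Sharp A.zero := by
  refine ⟨Set.mem_univ _, ?_, ?_⟩
  · intro a ha
    rcases ha with rfl | ha
    · exact le_refl _
    · exact zero_le _
  · intro z _ hz
    exact hz A.zero (by simp)

lemma sharp_one : A.Sharp A.one := by
  refine ⟨Set.mem_univ _, ?_, ?_⟩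
  · intro a ha
    rcases ha with rfl | ha
    · exact zero_le _
    · exact zero_le _
  · intro z _ hz
    have := hz (A.compl A.one) (by simp)
    rwa [compl_one] at this

lemma sharp_compl {w : E} (h : A.Sharp w) : A.Sharp (A.compl w) := by
  unfold Sharp
  rw [compl_compl, Set.pair_comm (A.compl w) w]
  exact h

/-- If `q` is sharp and `x ≤ q`, then the meet of `x'` and `q` is `q ⊖ x`. -/
lemma sharp_sub {x q m : E} (hq : A.Sharp q) (hle : A.le x q)
    (hm : A.IsInfIn Set.univ {A.compl x, q} m) :
    A.D x m ∧ A.oplus x m = q := by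
  obtain ⟨z, hdz, hez⟩ := hle
  have hz1 : A.le z (A.compl x) := le_compl_of_D hdz
  have hz2 : A.le z q := by
    refine ⟨x, A.D_comm _ _ hdz, ?_⟩
    rw [A.oplus_comm _ _ (A.D_comm _ _ hdz), hez]
  have hzm : A.le z m := hm.2.2 z (Set.mem_univ z) (isLB_pair.2 ⟨hz1, hz2⟩)
  have hmx : A.le m (A.compl x) := hm.2.1 (A.compl x) (by simp)
  have hmq : A.le m q := hm.2.1 q (by simp)
  have hdxm : A.D x m := D_of_le_compl hmx
  obtain ⟨s, hds, hes⟩ := hzm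
  -- x ⊕ m = x ⊕ (z ⊕ s) = (x ⊕ z) ⊕ s = q ⊕ s
  have hdx_zs : A.D x (A.oplus z s) := by rw [hes]; exact hdxm
  obtain ⟨hdxz, hdqs, he⟩ := A.assoc' _ _ _ hds hdx_zs
  rw [hez] at hdqs
  have hsq' : A.le s (A.compl q) := le_compl_of_D hdqs
  have hsm : A.le s m := by rw [← hes]; exact le_oplus_right hds
  have hsq : A.le s q := le_trans hsm hmq
  have hs0 : A.le s A.zero := hq.2.2 s (Set.mem_univ s) (isLB_pair.2 ⟨hsq, hsq'⟩)
  have hs : s = A.zero := le_zero hs0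
  refine ⟨hdxm, ?_⟩
  rw [← hes, hs, oplus_zero]
  exact hez

/-- Sharp elements are closed under `⊕`. -/
lemma sharp_oplus (hSD : A.SDominating) {p q : E} (hp : A.Sharp p) (hq : A.Sharp q)
    (hd : A.D p q) : A.Sharp (A.oplus p q) := by
  set r := A.oplus p q with hr
  have hpr : A.le p r := le_oplus_left hd
  have hqr : A.le q r := le_oplus_right hd
  have hr'p' : A.le (A.compl r) (A.compl p) := compl_le_compl hpr
  have hr'q' : A.le (A.compl r) (A.compl q) := compl_le_compl hqr
  -- meet of {r, compl p} is q
  obtain ⟨m₀, hm₀⟩ := hSD.2 (A.compl (A.compl r)) (A.compl p) (sharp_compl hp)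
  rw [compl_compl] at hm₀
  have hm₀' : A.IsInfIn Set.univ {A.compl (A.compl r), A.compl p} m₀ := by
    rwa [compl_compl]
  obtain ⟨hdm₀, hem₀⟩ := sharp_sub (sharp_compl hp) hr'p' hm₀'
  -- also compl r ⊕ q = compl p
  have hdq : A.D (A.compl r) q := D_of_le_compl (by rw [compl_compl]; exact hqr)
  have heq : A.oplus (A.compl r) q = A.compl p := by
    have h1 : A.D r (A.compl r) := A.D_compl r
    obtain ⟨hd1, hd2, he⟩ := A.assoc _ _ _ hd (by rw [← hr] at *; exact A.D_compl r)
    rw [A.oplus_compl] at he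
    have := A.compl_unique _ _ hd2 he.symm
    rw [A.oplus_comm _ _ hd1] at this
    exact this
  have hm₀q : m₀ = q := cancel hdm₀ hdq (by rw [hem₀, heq])
  refine ⟨Set.mem_univ _, ?_, ?_⟩
  · intro a ha
    rcases ha with rfl | ha
    · exact zero_le _
    · rcases ha with rfl; exact zero_le _
  · intro t _ ht
    obtain ⟨ht1, ht2⟩ := isLB_pair.1 ht
    have htp' : A.le t (A.compl p) := le_trans ht2 hr'p'
    have htq' : A.le t (A.compl q) := le_trans ht2 hr'q'
    have htm₀ : A.le t m₀ := hm₀.2.2 t (Set.mem_univ t) (isLB_pair.2 ⟨ht1, htp'⟩)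
    rw [hm₀q] at htm₀
    exact hq.2.2 t (Set.mem_univ t) (isLB_pair.2 ⟨htm₀, htq'⟩)

/-- the least sharp element above `x` -/
lemma hat (hSD : A.SDominating) (x : E) :
    ∃ w, A.Sharp w ∧ A.le x w ∧ (∀ z, A.Sharp z → A.le x z → A.le w z) := by
  obtain ⟨w, hw, hxw, hinf, _⟩ := hSD.1 x
  exact ⟨w, hw, hxw, fun z hz hxz => hinf.2.1 z ⟨hz, hxz⟩⟩

/-- the meet of two sharp elements is sharp -/
lemma sharp_meet (hSD : A.SDominating) {p q : E} (hp : A.Sharp p) (hq : A.Sharp q) :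
    ∃ m, A.IsInfIn Set.univ {p, q} m ∧ A.Sharp m := by
  obtain ⟨m, hm⟩ := hSD.2 p q hq
  refine ⟨m, hm, ?_⟩
  obtain ⟨w, hw, hmw, hmin⟩ := hat hSD m
  have h1 : A.le w p := hmin p hp (hm.2.1 p (by simp))
  have h2 : A.le w q := hmin q hq (hm.2.1 q (by simp))
  have : A.le w m := hm.2.2 w (Set.mem_univ w) (isLB_pair.2 ⟨h1, h2⟩)
  have : m = w := le_antisymm hmw this
  rwa [this]

end EffectAlgebra

namespace EffectAlgebra

variable {E : Type u} {A : EffectAlgebra E}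

lemma sumdef_unique {l : List E} {s t : E} (hs : A.SumDef l s) (ht : A.SumDef l t) :
    s = t := by
  induction hs generalizing t with
  | nil => cases ht; rfl
  | cons h hd ih =>
    cases ht with
    | cons h' hd' => rw [ih h']

lemma sumdef_swap {x y : E} {l : List E} {s : E} (h : A.SumDef (x :: y :: l) s) :
    A.SumDef (y :: x :: l) s := by
  cases h with
  | cons h2 hdx =>
    rename_i s'
    cases h2 with
    | cons h3 hdy =>
      rename_i t
      -- s = x ⊕ (y ⊕ t), with SumDef l t, D y t, D x (y⊕t)
      obtain ⟨hdxy, hdxyt, he⟩ := A.assoc' _ _ _ hdy hdx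
      have hdyx : A.D y x := A.D_comm _ _ hdxy
      have hdyx_t : A.D (A.oplus y x) t := by
        rwa [← A.oplus_comm _ _ hdxy]
      obtain ⟨hdxt, hdy_xt, he2⟩ := A.assoc _ _ _ hdyx hdyx_t
      have : A.oplus y (A.oplus x t) = A.oplus x (A.oplus y t) := by
        rw [← he2, A.oplus_comm _ _ hdyx, he]
      rw [← this]
      exact SumDef.cons (SumDef.cons h3 hdxt) hdy_xt

lemma sumdef_perm {l l' : List E} (hp : l.Perm l') {s : E} (h : A.SumDef l s) :
    A.SumDef l' s := by
  induction hp generalizing s with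
  | nil => exact h
  | cons x hp ih =>
    cases h with
    | cons h2 hd => exact SumDef.cons (ih h2) hd
  | swap x y l =>
    exact sumdef_swap h
  | trans h1 h2 ih1 ih2 =>
    exact ih2 (ih1 h)

lemma sumdef_le_mem {l : List E} {s a : E} (h : A.SumDef l s) (ha : a ∈ l) :
    A.le a s := by
  classical
  have hp : l.Perm (a :: l.erase a) := List.perm_cons_erase ha
  have h2 := sumdef_perm hp h
  cases h2 with
  | cons h3 hd => exact le_oplus_left hd

lemma sumdef_sharp (hSD : A.SDominating) {l : List E} {s : E}
    (hl : ∀ a ∈ l, A.Sharp a) (h : A.SumDef l s) : A.Sharp s := by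
  induction h with
  | nil => exact sharp_zero
  | cons h hd ih =>
    rename_i x l' s'
    exact sharp_oplus hSD (hl x (by simp)) (ih fun a ha => hl a (by simp [ha])) hd

lemma sumdef_singleton {a : E} : A.SumDef [a] a := by
  have := SumDef.cons (A := A) (SumDef.nil) (D_zero_right a)
  rwa [oplus_zero] at this

/-- a list of elements of `G` gives an element of `finiteSums` of the inclusion -/
lemma mem_finiteSums_of_list {G : Set E} {l : List E} (hnd : l.Nodup)
    (hG : ∀ a ∈ l, a ∈ G) {s : E} (h : A.SumDef l s) :
    s ∈ A.finiteSums (fun g : G => (g : E)) := by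
  classical
  refine ⟨l.attach.map (fun x => ⟨x.1, hG x.1 x.2⟩), ?_, ?_⟩
  case refine_2 =>
    have hmap : (l.attach.map (fun x => (⟨x.1, hG x.1 x.2⟩ : G))).map
        (fun g : G => (g : E)) = l := by
      rw [List.map_map]
      simp
    rw [hmap]; exact h
  case refine_1 =>
    have hmap : (l.attach.map (fun x => (⟨x.1, hG x.1 x.2⟩ : G))).map
        (fun g : G => (g : E)) = l := by
      rw [List.map_map]
      simp
    exact List.Nodup.of_map _ (by rw [hmap]; exact hnd)

/-- conversely, finite sums of the inclusion come from nodup lists in `G` -/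
lemma finiteSums_spec {G : Set E} {s : E}
    (hs : s ∈ A.finiteSums (fun g : G => (g : E))) :
    ∃ l : List E, l.Nodup ∧ (∀ a ∈ l, a ∈ G) ∧ A.SumDef l s := by
  obtain ⟨l, hnd, h⟩ := hs
  refine ⟨l.map (fun g : G => (g : E)), ?_, ?_, h⟩
  · exact hnd.map Subtype.val_injective
  · intro a ha
    simp only [List.mem_map] at ha
    obtain ⟨g, _, rfl⟩ := ha
    exact g.2

end EffectAlgebra

namespace EffectAlgebra

variable {E : Type u} {A : EffectAlgebra E}

/-- the difference of sharp elements is sharp -/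
lemma sub_sharp (hSD : A.SDominating) {σ q c : E} (hσ : A.Sharp σ) (hq : A.Sharp q)
    (hd : A.D σ c) (he : A.oplus σ c = q) : A.Sharp c := by
  have h1 : A.D (A.oplus σ c) (A.compl q) := by rw [he]; exact A.D_compl q
  obtain ⟨hd1, hd2, heq⟩ := A.assoc _ _ _ hd h1
  rw [he, A.oplus_compl] at heq
  have hd2' : A.D σ (A.oplus (A.compl q) c) := by
    rwa [← A.oplus_comm _ _ hd1]
  obtain ⟨hd3, hd4, heq2⟩ := A.assoc' _ _ _ (A.D_comm _ _ hd1) hd2'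
  have heq3 : A.oplus (A.oplus σ (A.compl q)) c = A.one := by
    rw [heq2, A.oplus_comm _ _ (A.D_comm _ _ hd1), ← heq]
  have : c = A.compl (A.oplus σ (A.compl q)) := A.compl_unique _ _ hd4 heq3
  rw [this]
  exact sharp_compl (sharp_oplus hSD hσ (sharp_compl hq) hd3)

lemma orthosum_sharp (hSD : A.SDominating) {ι : Type v} {x : ι → E}
    (hx : ∀ k, A.Sharp (x k)) {v : E} (hv : A.HasOrthoSum x v) : A.Sharp v := by
  obtain ⟨horth, hsup⟩ := hv
  -- finite sums are sharp and ≤ v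
  have hσ_sharp : ∀ σ ∈ A.finiteSums x, A.Sharp σ := by
    rintro σ ⟨l, hnd, hs⟩
    refine sumdef_sharp hSD ?_ hs
    intro a ha
    simp only [List.mem_map] at ha
    obtain ⟨k, _, rfl⟩ := ha
    exact hx k
  have hσ_le : ∀ σ ∈ A.finiteSums x, A.le σ v := fun σ hσ => hsup.2.1 σ hσ
  obtain ⟨vh, hvh_sharp, hvvh, hvh_min⟩ := hat hSD v
  obtain ⟨m, hm⟩ := hSD.2 (A.compl v) vh hvh_sharp
  obtain ⟨hdvm, hevm⟩ := sharp_sub hvh_sharp hvvh hm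
  obtain ⟨mh, hmh_sharp, hmmh, hmh_min⟩ := hat hSD m
  -- for each finite sum σ, mh ≤ compl σ
  have key : ∀ σ ∈ A.finiteSums x, A.le mh (A.compl σ) := by
    intro σ hσ
    obtain ⟨mσ, hmσ⟩ := hSD.2 (A.compl σ) vh hvh_sharp
    have hσv : A.le σ v := hσ_le σ hσ
    have hσvh : A.le σ vh := le_trans hσv hvvh
    obtain ⟨hdσm, heσm⟩ := sharp_sub hvh_sharp hσvh hmσ
    have hmσ_sharp : A.Sharp mσ := sub_sharp hSD (hσ_sharp σ hσ) hvh_sharp hdσm heσm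
    have hm_le_mσ : A.le m mσ := by
      refine hmσ.2.2 m (Set.mem_univ m) (isLB_pair.2 ⟨?_, ?_⟩)
      · exact le_trans (hm.2.1 (A.compl v) (by simp)) (compl_le_compl hσv)
      · exact hm.2.1 vh (by simp)
    exact le_trans (hmh_min mσ hmσ_sharp hm_le_mσ) (hmσ.2.1 (A.compl σ) (by simp))
  -- d = vh ∧ mh'
  have hmvh : A.le m vh := hm.2.1 vh (by simp)
  have hmhvh : A.le mh vh := hmh_min vh hvh_sharp hmvh
  obtain ⟨d, hd_inf⟩ := hSD.2 (A.compl mh) vh hvh_sharp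
  obtain ⟨hdmd, hemd⟩ := sharp_sub hvh_sharp hmhvh hd_inf
  -- every finite sum ≤ d, so v ≤ d
  have hvd : A.le v d := by
    refine hsup.2.2 d (Set.mem_univ d) ?_
    intro σ hσ
    refine hd_inf.2.2 σ (Set.mem_univ σ) (isLB_pair.2 ⟨?_, ?_⟩)
    · have := compl_le_compl (A := A) (key σ hσ)
      rwa [compl_compl] at this
    · exact le_trans (hσ_le σ hσ) hvvh
  -- mh ⊕ v ≤ mh ⊕ d = vh = v ⊕ m, hence mh ≤ m
  obtain ⟨hdvmh, hle1⟩ := oplus_le_oplus hvd (A.D_comm _ _ hdmd)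
  have hle2 : A.le (A.oplus v mh) (A.oplus v m) := by
    rw [hevm, ← hemd, A.oplus_comm _ _ hdmd]
    exact hle1
  have hmh_le_m : A.le mh m := cancel_le hdvmh hdvm hle2
  have hm_sharp : A.Sharp m := by
    have : m = mh := le_antisymm hmmh hmh_le_m
    rwa [this]
  -- compl v = m ⊕ compl vh is sharp
  have hdmvh' : A.D m (A.compl vh) := D_of_le_compl (le_trans (compl_le_compl hmvh) (le_refl _))
  have h1 : A.D (A.oplus v m) (A.compl vh) := by rw [hevm]; exact A.D_compl vh
  obtain ⟨hd1, hd2, heq⟩ := A.assoc _ _ _ hdvm h1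
  rw [hevm, A.oplus_compl] at heq
  have he_cv : A.oplus m (A.compl vh) = A.compl v := A.compl_unique _ _ hd2 heq.symm
  have : A.Sharp (A.compl v) := by
    rw [← he_cv]
    exact sharp_oplus hSD hm_sharp (sharp_compl hvh_sharp) hd1
  have := sharp_compl (A := A) this
  rwa [compl_compl] at this

end EffectAlgebra

namespace EffectAlgebra

variable {E : Type u} {A : EffectAlgebra E}

lemma sharp_of_inf (hSD : A.SDominating) {p q m : E} (hp : A.Sharp p) (hq : A.Sharp q)
    (hm : A.IsInfIn Set.univ {p, q} m) : A.Sharp m := by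
  obtain ⟨w, hw, hmw, hmin⟩ := hat hSD m
  have h1 : A.le w p := hmin p hp (hm.2.1 p (by simp))
  have h2 : A.le w q := hmin q hq (hm.2.1 q (by simp))
  have h3 : A.le w m := hm.2.2 w (Set.mem_univ w) (isLB_pair.2 ⟨h1, h2⟩)
  have : m = w := le_antisymm hmw h3
  rwa [this]

lemma chain_list_mem {α : Type*} {c : Set (Set α)} (hchain : IsChain (· ⊆ ·) c)
    (hcne : c.Nonempty) :
    ∀ l : List α, (∀ a ∈ l, a ∈ ⋃₀ c) → ∃ G ∈ c, ∀ a ∈ l, a ∈ G := by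
  intro l
  induction l with
  | nil =>
    intro _
    obtain ⟨t, ht⟩ := hcne
    exact ⟨t, ht, by simp⟩
  | cons a l ih =>
    intro hl
    obtain ⟨G1, hG1c, hG1⟩ := ih (fun b hb => hl b (List.mem_cons_of_mem a hb))
    obtain ⟨G2, hG2c, haG2⟩ := hl a List.mem_cons_self
    rcases eq_or_ne G1 G2 with rfl | hne
    · exact ⟨G1, hG1c, fun b hb => by
        rcases List.mem_cons.1 hb with rfl | hb
        exacts [haG2, hG1 b hb]⟩
    rcases hchain hG1c hG2c hne with h | h
    · exact ⟨G2, hG2c, fun b hb => by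
        rcases List.mem_cons.1 hb with rfl | hb
        exacts [haG2, h (hG1 b hb)]⟩
    · exact ⟨G1, hG1c, fun b hb => by
        rcases List.mem_cons.1 hb with rfl | hb
        exacts [h haG2, hG1 b hb]⟩

/-- the key proposition: every set of sharp elements has a sharp supremum in `E` -/
lemma exists_sharp_sup (hSO : A.SharplyOrthocomplete) (hSD : A.SDominating)
    {S : Set E} (hS : S ⊆ A.sharpSet) :
    ∃ v, A.Sharp v ∧ A.IsSupIn Set.univ S v := by
  classical
  set U : Set E := {u | A.IsUB S u} with hU
  set 𝒢 : Set (Set E) :=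
    {G | G ⊆ A.sharpSet ∧ ∀ l : List E, l.Nodup → (∀ a ∈ l, a ∈ G) →
      ∃ s, A.SumDef l s ∧ ∀ u ∈ U, A.le s u} with h𝒢
  have hempty : (∅ : Set E) ∈ 𝒢 := by
    refine ⟨by simp, ?_⟩
    intro l hnd hl
    have hl0 : l = [] := by
      cases l with
      | nil => rfl
      | cons a l => exact absurd (hl a (by simp)) (by simp)
    subst hl0
    exact ⟨A.zero, SumDef.nil, fun u _ => zero_le u⟩
  have hzorn : ∀ c ⊆ 𝒢, IsChain (· ⊆ ·) c → ∃ ub ∈ 𝒢, ∀ s ∈ c, s ⊆ ub := by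
    intro c hcS hchain
    rcases c.eq_empty_or_nonempty with rfl | hcne
    · exact ⟨∅, hempty, by simp⟩
    refine ⟨⋃₀ c, ⟨?_, ?_⟩, fun s hs => Set.subset_sUnion_of_mem hs⟩
    · rintro a ⟨t, htc, hat⟩
      exact (hcS htc).1 hat
    · intro l hnd hl
      obtain ⟨G0, hG0c, hG0⟩ := chain_list_mem hchain hcne l hl
      exact (hcS hG0c).2 l hnd hG0
  obtain ⟨G, hGmax⟩ := zorn_subset 𝒢 hzorn
  obtain ⟨⟨hGsharp, hGsum⟩, hGmaximal⟩ := hGmax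
  -- the orthogonal family of elements of G
  set fam : ↥G → E := fun g => (g : E) with hfam
  have horth : A.Orthogonal fam := by
    intro l hnd
    obtain ⟨s, hs, _⟩ := hGsum (l.map fam) (hnd.map Subtype.val_injective)
      (fun a ha => by
        simp only [List.mem_map] at ha
        obtain ⟨g, _, rfl⟩ := ha
        exact g.2)
    exact ⟨s, hs⟩
  obtain ⟨v, hOS⟩ := hSO ↥G fam fam (fun g => hGsharp g.2) horth (fun g => le_refl _)
  have hv_sharp : A.Sharp v := orthosum_sharp hSD (fun g => hGsharp g.2) hOS
  have hsup := hOS.2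
  have hvU : ∀ u ∈ U, A.le v u := by
    intro u hu
    refine hsup.2.2 u (Set.mem_univ u) ?_
    intro σ hσ
    obtain ⟨l, hnd, hlG, hsum⟩ := finiteSums_spec hσ
    obtain ⟨s', hs', hb⟩ := hGsum l hnd hlG
    rw [sumdef_unique hsum hs']
    exact hb u hu
  have hvUB : A.IsUB S v := by
    intro s hs
    by_contra hns
    have hs_sharp : A.Sharp s := hS hs
    obtain ⟨m', hm'⟩ := hSD.2 (A.compl s) (A.compl v) (sharp_compl hv_sharp)
    have hm'_sharp : A.Sharp m' :=
      sharp_of_inf hSD (sharp_compl hs_sharp) (sharp_compl hv_sharp) hm'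
    set j := A.compl m' with hj
    have hj_sharp : A.Sharp j := sharp_compl hm'_sharp
    have hvj : A.le v j := by
      have := compl_le_compl (A := A) (hm'.2.1 (A.compl v) (by simp))
      rwa [compl_compl] at this
    have hsj : A.le s j := by
      have := compl_le_compl (A := A) (hm'.2.1 (A.compl s) (by simp))
      rwa [compl_compl] at this
    have hjU : ∀ u ∈ U, A.le j u := by
      intro u hu
      have h1 : A.le (A.compl u) (A.compl s) := compl_le_compl (hu s hs)
      have h2 : A.le (A.compl u) (A.compl v) := compl_le_compl (hvU u hu)
      have h3 : A.le (A.compl u) m' :=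
        hm'.2.2 _ (Set.mem_univ _) (isLB_pair.2 ⟨h1, h2⟩)
      have := compl_le_compl (A := A) h3
      rwa [compl_compl] at this
    obtain ⟨t, ht_inf⟩ := hSD.2 (A.compl v) j hj_sharp
    obtain ⟨hdvt, hevt⟩ := sharp_sub hj_sharp hvj ht_inf
    have ht_sharp : A.Sharp t := sharp_of_inf hSD (sharp_compl hv_sharp) hj_sharp ht_inf
    have htne : t ≠ A.zero := by
      intro h0
      rw [h0, oplus_zero] at hevt
      exact hns (by rw [← hevt] at hsj; exact hsj)
    have htcv : A.le t (A.compl v) := ht_inf.2.1 (A.compl v) (by simp)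
    have htG : t ∉ G := by
      intro htG
      have htv : A.le t v := by
        refine hsup.2.1 t (mem_finiteSums_of_list (by simp) ?_ sumdef_singleton)
        intro a ha
        simp only [List.mem_singleton] at ha
        subst ha; exact htG
      have : A.le t A.zero :=
        hv_sharp.2.2 t (Set.mem_univ t) (isLB_pair.2 ⟨htv, htcv⟩)
      exact htne (le_zero this)
    -- G ∪ {t} is in 𝒢, contradicting maximality
    have hG' : insert t G ∈ 𝒢 := by
      constructor
      · rintro a (rfl | ha)
        exacts [ht_sharp, hGsharp ha]
      · intro l hnd hl
        by_cases htl : t ∈ l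
        · set l₂ := l.erase t with hl₂
          have hperm : l.Perm (t :: l₂) := List.perm_cons_erase htl
          have hnd₂ : l₂.Nodup := hnd.erase t
          have htl₂ : t ∉ l₂ := by
            intro h
            exact ((List.Nodup.mem_erase_iff hnd).1 h).1 rfl
          have hl₂G : ∀ a ∈ l₂, a ∈ G := by
            intro a ha
            have h1 : a ∈ l := List.mem_of_mem_erase ha
            rcases hl a h1 with rfl | h2
            · exact absurd ha htl₂
            · exact h2
          obtain ⟨σ, hσsum, hσb⟩ := hGsum l₂ hnd₂ hl₂G
          have hσv : A.le σ v := hsup.2.1 σ (mem_finiteSums_of_list hnd₂ hl₂G hσsum)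
          have hdσt : A.D σ t := D_of_le_compl (le_trans htcv (compl_le_compl hσv))
          have hsum' : A.SumDef (t :: l₂) (A.oplus t σ) :=
            SumDef.cons hσsum (A.D_comm _ _ hdσt)
          refine ⟨A.oplus t σ, sumdef_perm hperm.symm hsum', ?_⟩
          intro u hu
          obtain ⟨_, hle⟩ := oplus_le_oplus hσv hdvt
          rw [hevt] at hle
          rw [A.oplus_comm _ _ (A.D_comm _ _ hdσt)]
          exact le_trans hle (hjU u hu)
        · refine hGsum l hnd ?_
          intro a ha
          rcases hl a ha with rfl | h2
          · exact absurd ha htl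
          · exact h2
    have : insert t G ⊆ G := hGmaximal hG' (Set.subset_insert t G)
    exact htG (this (Set.mem_insert t G))
  exact ⟨v, hv_sharp, Set.mem_univ v, hvUB, fun z _ hz => hvU z hz⟩

end EffectAlgebra

namespace EffectAlgebra

variable {E : Type u} {A : EffectAlgebra E}

lemma supIn_sharp_of_univ {S : Set E} {v : E} (hv : A.Sharp v)
    (h : A.IsSupIn Set.univ S v) : A.IsSupIn A.sharpSet S v :=
  ⟨hv, h.2.1, fun z _ hub => h.2.2 z (Set.mem_univ z) hub⟩

lemma exists_sharp_inf (hSO : A.SharplyOrthocomplete) (hSD : A.SDominating)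
    {S : Set E} (hS : S ⊆ A.sharpSet) :
    ∃ m, A.Sharp m ∧ A.IsInfIn Set.univ S m := by
  obtain ⟨w, hw, hsup⟩ := exists_sharp_sup hSO hSD (S := A.compl '' S)
    (by rintro _ ⟨s, hs, rfl⟩; exact sharp_compl (hS hs))
  refine ⟨A.compl w, sharp_compl hw, Set.mem_univ _, ?_, ?_⟩
  · intro s hs
    have h1 : A.le (A.compl s) w := hsup.2.1 _ ⟨s, hs, rfl⟩
    have := compl_le_compl (A := A) h1
    rwa [compl_compl] at this
  · intro z _ hz
    have h1 : A.IsUB (A.compl '' S) (A.compl z) := by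
      rintro _ ⟨s, hs, rfl⟩
      exact compl_le_compl (hz s hs)
    have h2 : A.le w (A.compl z) := hsup.2.2 _ (Set.mem_univ _) h1
    have := compl_le_compl (A := A) h2
    rwa [compl_compl] at this

end EffectAlgebra

/-- In a sharply orthocomplete S-dominating effect algebra, `S(E)` is a complete
orthomodular lattice bifull in `E`. -/
theorem stmt8 {E : Type u} (A : EffectAlgebra E)
    (hSO : A.SharplyOrthocomplete) (hSD : A.SDominating) :
    A.CompleteIn A.sharpSet ∧ A.OrthomodularIn A.sharpSet ∧
      A.Bifull A.sharpSet := by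
  open EffectAlgebra in
  have hcomp : A.CompleteIn A.sharpSet := by
    intro S hS
    constructor
    · obtain ⟨v, hv, hsup⟩ := exists_sharp_sup hSO hSD hS
      exact ⟨v, supIn_sharp_of_univ hv hsup⟩
    · obtain ⟨m, hm, hinf⟩ := exists_sharp_inf hSO hSD hS
      exact ⟨m, hm, hinf.2.1, fun z _ hlb => hinf.2.2 z (Set.mem_univ z) hlb⟩
  have hbifull : A.Bifull A.sharpSet := by
    intro S hS
    obtain ⟨v, hv, hsup⟩ := exists_sharp_sup hSO hSD hS
    have hvP : A.IsSupIn A.sharpSet S v := supIn_sharp_of_univ hv hsup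
    constructor
    · intro s hsP
      have : s = v := supIn_unique hsP hvP
      rwa [this]
    · intro s hsU
      have : s = v := sup_unique hsU hsup
      rwa [this]
  have homl : A.OrthomodularIn A.sharpSet := by
    refine ⟨?_, sharp_zero, sharp_one, fun x hx => sharp_compl hx, ?_, ?_⟩
    · -- binary meets and joins
      intro x hx y hy
      constructor
      · obtain ⟨m, hm, hmS⟩ := sharp_meet hSD hx hy
        exact ⟨m, hmS, hm.2.1, fun z _ hlb => hm.2.2 z (Set.mem_univ z) hlb⟩
      · have hpair : {x, y} ⊆ A.sharpSet := by
          rintro a (rfl | ha)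
          · exact hx
          · rcases ha with rfl; exact hy
        obtain ⟨v, hv, hsup⟩ := exists_sharp_sup hSO hSD hpair
        exact ⟨v, supIn_sharp_of_univ hv hsup⟩
    · -- x ∧ x' = 0 and x ∨ x' = 1 in S(E)
      intro x hx
      constructor
      · exact ⟨sharp_zero, hx.2.1, fun z _ hlb => hx.2.2 z (Set.mem_univ z) hlb⟩
      · refine ⟨sharp_one, isUB_pair.2 ⟨le_one x, le_one (A.compl x)⟩, ?_⟩
        intro z _ hub
        obtain ⟨h1, h2⟩ := isUB_pair.1 hub
        have hz1 : A.le (A.compl z) (A.compl x) := compl_le_compl h1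
        have hz2 : A.le (A.compl z) x := by
          have := compl_le_compl (A := A) h2
          rwa [compl_compl] at this
        have hz0 : A.le (A.compl z) A.zero :=
          hx.2.2 _ (Set.mem_univ _) (isLB_pair.2 ⟨hz2, hz1⟩)
        have hz0' : A.compl z = A.zero := le_zero hz0
        have : z = A.one := by
          have := congrArg A.compl hz0'
          rwa [compl_compl, compl_zero] at this
        rw [this]
        exact le_refl _
    · -- orthomodularity
      intro x hx y hy hxy
      obtain ⟨m, hm⟩ := hSD.2 y (A.compl x) (sharp_compl hx)
      have hm_sharp : A.Sharp m := sharp_of_inf hSD hy (sharp_compl hx) hm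
      obtain ⟨hdxm, hexm⟩ := sharp_sub hy hxy (inf_pair_comm hm)
      refine ⟨m, ⟨hm_sharp, hm.2.1, fun z _ hlb => hm.2.2 z (Set.mem_univ z) hlb⟩,
        hy, isUB_pair.2 ⟨hxy, hm.2.1 y (by simp)⟩, ?_⟩
      intro z hz hub
      obtain ⟨h1, h2⟩ := isUB_pair.1 hub
      obtain ⟨mz, hmz⟩ := hSD.2 (A.compl x) z hz
      obtain ⟨hdxmz, hexmz⟩ := sharp_sub hz h1 hmz
      have hmmz : A.le m mz :=
        hmz.2.2 m (Set.mem_univ m) (isLB_pair.2 ⟨hm.2.1 (A.compl x) (by simp), h2⟩)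
      obtain ⟨hdmx, hle⟩ := oplus_le_oplus hmmz (A.D_comm _ _ hdxmz)
      rw [A.oplus_comm _ _ hdmx, A.oplus_comm _ _ (A.D_comm _ _ hdxmz)] at hle
      rw [hexm, hexmz] at hle
      exact hle
  exact ⟨hcomp, homl, hbifull⟩
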